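/- For 1 ≤ ℓ ≤ 4 and any 3-uniform hypergraph G with at most 4 edges containing a fixed vertex v, the Berge degree of v equals the degree of v. In particular, if every vertex of G has degree at most ℓ − 1 ≤ 3, then G is Berge-K_{1,ℓ}-free, and a 3-graph with a vertex of degree ℓ ≤ 4 contains a Berge-K_{1,ℓ} centered at that vertex. -/

import Mathlib

open Finset

variable {V : Type} [DecidableEq V]

/-- A hypergraph (given by its edge set) is 3-uniform. -/
def Uniform3 (E : Finset (Finset V)) : Prop := ∀ e ∈ E, e.card = 3

/-- There is a Berge star `K_{1,m}` centered at `v`: `m` distinct leaves `y i`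
and `m` distinct hyperedges `f i` with `{v, y i} ⊆ f i`. -/
def IsBergeStar (E : Finset (Finset V)) (v : V) (m : ℕ) : Prop :=
  ∃ (y : Fin m → V) (f : Fin m → Finset V),
    Function.Injective y ∧ Function.Injective f ∧
    ∀ i, f i ∈ E ∧ v ∈ f i ∧ y i ∈ f i ∧ y i ≠ v

/-- The Berge degree of `v`: the largest `m` such that a Berge star `K_{1,m}`
centered at `v` exists. -/
noncomputable def bergeDeg (E : Finset (Finset V)) (v : V) : ℕ :=
  sSup {m | IsBergeStar E v m}

/-- The degree of `v`: the number of hyperedges containing `v`. -/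
def hdeg (E : Finset (Finset V)) (v : V) : ℕ := (E.filter (fun e => v ∈ e)).card

/-- The neighborhood of `v`: vertices sharing an edge with `v`. -/
def nbr (E : Finset (Finset V)) (v : V) : Finset V :=
  ((E.filter (fun e => v ∈ e)).biUnion id).erase v


lemma bergeStar_zero (E : Finset (Finset V)) (v : V) : IsBergeStar E v 0 :=
  ⟨Fin.elim0, Fin.elim0, fun a => a.elim0, fun a => a.elim0, fun i => i.elim0⟩

lemma bergeStar_le_hdeg {E : Finset (Finset V)} {v : V} {m : ℕ}
    (h : IsBergeStar E v m) : m ≤ hdeg E v := by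
  obtain ⟨y, f, hy, hf, hprop⟩ := h
  have : (Finset.univ : Finset (Fin m)).card ≤ (E.filter (fun e => v ∈ e)).card := by
    apply Finset.card_le_card_of_injOn f
    · intro i _
      exact Finset.mem_filter.mpr ⟨(hprop i).1, (hprop i).2.1⟩
    · exact fun a _ b _ hab => hf hab
  simpa [hdeg] using this

lemma choose_bound {k n : ℕ} (hk4 : k ≤ 4) (hk : k ≤ n.choose 2) : k ≤ n := by
  rcases le_or_gt 4 n with h | h
  · omega
  · interval_cases n <;> simp [Nat.choose] at hk <;> omega

lemma bergeStar_hdeg {E : Finset (Finset V)} (hU : Uniform3 E) (v : V)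
    (h : hdeg E v ≤ 4) : IsBergeStar E v (hdeg E v) := by
  classical
  set S := E.filter (fun e => v ∈ e) with hS
  have hmemS : ∀ e ∈ S, e ∈ E ∧ v ∈ e := by
    intro e he; exact Finset.mem_filter.mp he
  have hcard2 : ∀ e ∈ S, (e.erase v).card = 2 := by
    intro e he
    obtain ⟨heE, hve⟩ := hmemS e he
    rw [Finset.card_erase_of_mem hve, hU e heE]
  -- Hall's condition
  have hall : ∀ s : Finset {x // x ∈ S},
      s.card ≤ (s.biUnion (fun e => e.val.erase v)).card := by
    intro s
    set U := s.biUnion (fun e => e.val.erase v) with hUdef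
    have hinj : Set.InjOn (fun e : {x // x ∈ S} => e.val.erase v) s := by
      intro a _ b _ hab
      have ha : a.val = insert v (a.val.erase v) :=
        (Finset.insert_erase (hmemS a.val a.property).2).symm
      have hb : b.val = insert v (b.val.erase v) :=
        (Finset.insert_erase (hmemS b.val b.property).2).symm
      apply Subtype.ext
      rw [ha, hb]
      exact congrArg (insert v) hab
    have h1 : s.card = (s.image (fun e => e.val.erase v)).card :=
      (Finset.card_image_of_injOn hinj).symm
    have h2 : s.image (fun e => e.val.erase v) ⊆ U.powersetCard 2 := by
      intro a ha
      obtain ⟨e, he, rfl⟩ := Finset.mem_image.mp ha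
      exact Finset.mem_powersetCard.mpr
        ⟨Finset.subset_biUnion_of_mem (fun e : {x // x ∈ S} => e.val.erase v) he,
         hcard2 e.val e.property⟩
    have h3 : s.card ≤ U.card.choose 2 := by
      rw [h1]
      calc (s.image (fun e => e.val.erase v)).card ≤ (U.powersetCard 2).card :=
            Finset.card_le_card h2
        _ = U.card.choose 2 := Finset.card_powersetCard 2 U
    have h5 : s.card ≤ 4 := by
      calc s.card ≤ Fintype.card {x // x ∈ S} := by
            simpa using Finset.card_le_univ s
        _ = S.card := Fintype.card_coe S
        _ ≤ 4 := h
    exact choose_bound h5 h3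
  obtain ⟨g, hg, hgt⟩ :=
    (Finset.all_card_le_biUnion_card_iff_exists_injective
      (fun e : {x // x ∈ S} => e.val.erase v)).mp hall
  have hcardeq : Fintype.card {x // x ∈ S} = hdeg E v := Fintype.card_coe S
  let eqv : Fin (hdeg E v) ≃ {x // x ∈ S} :=
    (Fintype.equivFinOfCardEq hcardeq).symm
  refine ⟨fun i => g (eqv i), fun i => (eqv i).val, ?_, ?_, ?_⟩
  · exact fun a b hab => eqv.injective (hg hab)
  · exact fun a b hab => eqv.injective (Subtype.ext hab)
  · intro i
    have hm := hmemS (eqv i).val (eqv i).property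
    have hgi := hgt (eqv i)
    exact ⟨hm.1, hm.2, Finset.mem_of_mem_erase hgi, Finset.ne_of_mem_erase hgi⟩

theorem stmt19 (ℓ : ℕ) (h1 : 1 ≤ ℓ) (h4 : ℓ ≤ 4)
    (E : Finset (Finset V)) (hU : Uniform3 E) :
    (∀ v : V, hdeg E v ≤ 4 → bergeDeg E v = hdeg E v) ∧
    ((∀ v : V, hdeg E v ≤ ℓ - 1) → ∀ v : V, ¬ IsBergeStar E v ℓ) ∧
    (∀ v : V, hdeg E v = ℓ → IsBergeStar E v ℓ) := by
  refine ⟨?_, ?_, ?_⟩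
  · intro v hv
    apply le_antisymm
    · apply csSup_le ⟨0, by exact bergeStar_zero E v⟩
      intro m hm
      exact bergeStar_le_hdeg hm
    · exact le_csSup ⟨hdeg E v, fun m hm => bergeStar_le_hdeg hm⟩
        (by exact bergeStar_hdeg hU v hv)
  · intro hd v hb
    have := bergeStar_le_hdeg hb
    have := hd v
    omega
  · intro v hv
    have := bergeStar_hdeg hU v (by omega)
    rwa [hv] at this
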